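/- Let A be an ℝ-weighted automaton, let A^B be a backward WA of A with base B (where the columns of B form a basis of the backward space of A), and let A' = A^{BF} be a forward WA of A^B with base F̃ (where the rows of F̃ form a basis of the forward space of A^B). Then A' is equivalent to A and A' is minimal, i.e., every WA equivalent to A has size at least the size of A'. The same conclusion holds for A' = A^{FB}, obtained by first taking a forward WA of A and then a backward WA of it. -/

import Mathlib

open Matrix

noncomputable section

/-- The matrix `M(w)` of a word: `M(ε) = I`, `M(a₁⋯a_k) = M(a₁)⋯M(a_k)`. -/
def wordProd {S : Type*} {Γ : Type*} [Fintype S] [DecidableEq S]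
    (M : Γ → Matrix S S ℝ) (w : List Γ) : Matrix S S ℝ :=
  (w.map M).prod

/-- The language of the weighted automaton `(M, α, η)`: `L(w) = α M(w) η`. -/
def WAlang {S : Type*} {Γ : Type*} [Fintype S] [DecidableEq S]
    (M : Γ → Matrix S S ℝ) (α η : S → ℝ) (w : List Γ) : ℝ :=
  α ⬝ᵥ (wordProd M w).mulVec η

/-- `(Mt, αt, ηt)` is a forward WA of `(M, α, η)` with base `F`:
the rows of `F` form a basis of the forward space, `F M(a) = M̃(a) F`,
`α = α̃ F`, and the final vector of the forward WA is `F η`. -/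
def IsForwardWAOf {Γ : Type*} {n nh : ℕ}
    (M : Γ → Matrix (Fin n) (Fin n) ℝ) (α η : Fin n → ℝ)
    (Mt : Γ → Matrix (Fin nh) (Fin nh) ℝ) (αt ηt : Fin nh → ℝ)
    (F : Matrix (Fin nh) (Fin n) ℝ) : Prop :=
  LinearIndependent ℝ (fun i => F i) ∧
  Submodule.span ℝ (Set.range (fun i => F i)) =
    Submodule.span ℝ {x : Fin n → ℝ | ∃ w : List Γ, x = Matrix.vecMul α (wordProd M w)} ∧
  (∀ a, F * M a = Mt a * F) ∧
  α = Matrix.vecMul αt F ∧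
  ηt = F.mulVec η

/-- `(Mh, αh, ηh)` is a backward WA of `(M, α, η)` with base `B`:
the columns of `B` form a basis of the backward space, `M(a) B = B M̂(a)`,
`η = B η̂`, and the initial vector of the backward WA is `α B`. -/
def IsBackwardWAOf {Γ : Type*} {n nh : ℕ}
    (M : Γ → Matrix (Fin n) (Fin n) ℝ) (α η : Fin n → ℝ)
    (Mh : Γ → Matrix (Fin nh) (Fin nh) ℝ) (αh ηh : Fin nh → ℝ)
    (B : Matrix (Fin n) (Fin nh) ℝ) : Prop :=
  LinearIndependent ℝ (fun j => Bᵀ j) ∧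
  Submodule.span ℝ (Set.range (fun j => Bᵀ j)) =
    Submodule.span ℝ {x : Fin n → ℝ | ∃ w : List Γ, x = (wordProd M w).mulVec η} ∧
  (∀ a, M a * B = B * Mh a) ∧
  αh = Matrix.vecMul α B ∧
  η = B.mulVec ηh

/-- the WA `A' = A^{BF}` (or `A' = A^{FB}`) is equivalent to `A`
and minimal: every WA equivalent to `A` has at least as many states as `A'`. -/
/- ## Auxiliary lemmas -/


lemma wordProd_nil {S Γ : Type*} [Fintype S] [DecidableEq S] (M : Γ → Matrix S S ℝ) :
    wordProd M [] = 1 := rfl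

lemma wordProd_cons {S Γ : Type*} [Fintype S] [DecidableEq S] (M : Γ → Matrix S S ℝ)
    (a : Γ) (w : List Γ) : wordProd M (a :: w) = M a * wordProd M w := by
  simp [wordProd]

lemma wordProd_append {S Γ : Type*} [Fintype S] [DecidableEq S] (M : Γ → Matrix S S ℝ)
    (u v : List Γ) : wordProd M (u ++ v) = wordProd M u * wordProd M v := by
  simp [wordProd]

lemma intertwine {Γ : Type*} {n m : ℕ}
    (M : Γ → Matrix (Fin n) (Fin n) ℝ) (Mt : Γ → Matrix (Fin m) (Fin m) ℝ)
    (F : Matrix (Fin m) (Fin n) ℝ) (h : ∀ a, F * M a = Mt a * F) (w : List Γ) :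
    F * wordProd M w = wordProd Mt w * F := by
  induction w with
  | nil => simp [wordProd_nil]
  | cons a w ih =>
    rw [wordProd_cons, wordProd_cons, ← Matrix.mul_assoc, h a, Matrix.mul_assoc, ih, ← Matrix.mul_assoc]

/-- Forward spanning set as a range. -/
lemma fwdSet_eq_range {Γ : Type*} {n : ℕ} (M : Γ → Matrix (Fin n) (Fin n) ℝ) (α : Fin n → ℝ) :
    {x : Fin n → ℝ | ∃ w : List Γ, x = Matrix.vecMul α (wordProd M w)} =
      Set.range (fun w : List Γ => Matrix.vecMul α (wordProd M w)) := by
  ext x; simp [eq_comm]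

lemma bwdSet_eq_range {Γ : Type*} {n : ℕ} (M : Γ → Matrix (Fin n) (Fin n) ℝ) (η : Fin n → ℝ) :
    {x : Fin n → ℝ | ∃ w : List Γ, x = (wordProd M w).mulVec η} =
      Set.range (fun w : List Γ => (wordProd M w).mulVec η) := by
  ext x; simp [eq_comm]

lemma forward_lang {Γ : Type*} {n nh : ℕ}
    {M : Γ → Matrix (Fin n) (Fin n) ℝ} {α η : Fin n → ℝ}
    {Mt : Γ → Matrix (Fin nh) (Fin nh) ℝ} {αt ηt : Fin nh → ℝ}
    {F : Matrix (Fin nh) (Fin n) ℝ} (h : IsForwardWAOf M α η Mt αt ηt F) :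
    ∀ w, WAlang Mt αt ηt w = WAlang M α η w := by
  obtain ⟨-, -, hc, hα, hη⟩ := h
  intro w
  rw [WAlang, WAlang, hα, hη, Matrix.mulVec_mulVec, ← intertwine M Mt F hc w,
    ← Matrix.mulVec_mulVec]
  simp only [Matrix.dotProduct_mulVec, Matrix.vecMul_vecMul]

lemma backward_lang {Γ : Type*} {n nh : ℕ}
    {M : Γ → Matrix (Fin n) (Fin n) ℝ} {α η : Fin n → ℝ}
    {Mh : Γ → Matrix (Fin nh) (Fin nh) ℝ} {αh ηh : Fin nh → ℝ}
    {B : Matrix (Fin n) (Fin nh) ℝ} (h : IsBackwardWAOf M α η Mh αh ηh B) :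
    ∀ w, WAlang Mh αh ηh w = WAlang M α η w := by
  obtain ⟨-, -, hc, hα, hη⟩ := h
  intro w
  have hw : wordProd M w * B = B * wordProd Mh w :=
    (intertwine Mh M B (fun a => (hc a).symm) w).symm
  rw [WAlang, WAlang, hα, hη, Matrix.mulVec_mulVec, hw, ← Matrix.mulVec_mulVec]
  simp only [Matrix.dotProduct_mulVec, Matrix.vecMul_vecMul]

/-- Rows linearly independent implies `mulVec` surjective. -/
lemma mulVec_surjective_of_li_rows {m k : ℕ} {F : Matrix (Fin m) (Fin k) ℝ}
    (h : LinearIndependent ℝ (fun i => F i)) : Function.Surjective F.mulVec := by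
  have hr : F.rank = m := by
    simpa using h.rank_matrix
  have htop : LinearMap.range F.mulVecLin = ⊤ := by
    apply Submodule.eq_top_of_finrank_eq
    rw [Module.finrank_fin_fun]
    exact hr
  have hs := LinearMap.range_eq_top.mp htop
  simpa [Matrix.coe_mulVecLin] using hs

/-- Columns linearly independent implies `vecMul · B` surjective. -/
lemma vecMul_surjective_of_li_cols {m k : ℕ} {B : Matrix (Fin m) (Fin k) ℝ}
    (h : LinearIndependent ℝ (fun j => Bᵀ j)) :
    Function.Surjective (fun x => Matrix.vecMul x B) := by
  have := mulVec_surjective_of_li_rows (F := Bᵀ) h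
  intro y
  obtain ⟨x, hx⟩ := this y
  exact ⟨x, by simpa [Matrix.mulVec_transpose] using hx⟩

/-- Transport spanning-top along an injective linear map. -/
lemma span_eq_top_of_inj {m k : ℕ} (f : (Fin m → ℝ) →ₗ[ℝ] (Fin k → ℝ))
    (hf : Function.Injective f) {ι : Type*} (g : ι → (Fin m → ℝ)) (g' : ι → (Fin k → ℝ))
    (hgg : ∀ i, f (g i) = g' i)
    (hT : Submodule.span ℝ (Set.range g') = LinearMap.range f) :
    Submodule.span ℝ (Set.range g) = ⊤ := by
  have him : f '' (Set.range g) = Set.range g' := by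
    rw [← Set.range_comp]; exact congrArg Set.range (funext hgg)
  apply Submodule.map_injective_of_injective hf
  rw [Submodule.map_span, him, hT, Submodule.map_top]

lemma span_eq_top_of_surj {m k : ℕ} (f : (Fin m → ℝ) →ₗ[ℝ] (Fin k → ℝ))
    (hf : Function.Surjective f) {ι : Type*} (g : ι → (Fin m → ℝ)) (g' : ι → (Fin k → ℝ))
    (hgg : ∀ i, f (g i) = g' i)
    (hS : Submodule.span ℝ (Set.range g) = ⊤) :
    Submodule.span ℝ (Set.range g') = ⊤ := by
  have him : f '' (Set.range g) = Set.range g' := by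
    rw [← Set.range_comp]; exact congrArg Set.range (funext hgg)
  rw [← him, ← Submodule.map_span, hS, Submodule.map_top]
  exact LinearMap.range_eq_top.mpr hf

/-- Core minimality: if the forward and backward vectors of `(M', α', η')` each span the
whole space, any equivalent WA has at least `n'` states. -/
lemma key_minimal {Γ : Type*} {n' n'' : ℕ}
    (M' : Γ → Matrix (Fin n') (Fin n') ℝ) (α' η' : Fin n' → ℝ)
    (hf : Submodule.span ℝ
      (Set.range (fun w : List Γ => Matrix.vecMul α' (wordProd M' w))) = ⊤)
    (hb : Submodule.span ℝ
      (Set.range (fun w : List Γ => (wordProd M' w).mulVec η')) = ⊤)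
    (M'' : Γ → Matrix (Fin n'') (Fin n'') ℝ) (α'' η'' : Fin n'' → ℝ)
    (heq : ∀ w : List Γ, WAlang M'' α'' η'' w = WAlang M' α' η' w) : n' ≤ n'' := by
  classical
  -- extract basis from forward spanning set
  obtain ⟨u, hu⟩ : ∃ u : Fin n' → List Γ,
      LinearIndependent ℝ (fun i => Matrix.vecMul α' (wordProd M' (u i))) := by
    obtain ⟨t, hts, hsp, hli⟩ := exists_linearIndependent ℝ
      (Set.range (fun w : List Γ => Matrix.vecMul α' (wordProd M' w)))
    rw [hf] at hsp
    have b : Module.Basis t ℝ (Fin n' → ℝ) := Module.Basis.mk hli (by rw [Subtype.range_coe, hsp])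
    have : Fintype t := FiniteDimensional.fintypeBasisIndex b
    have hcard : Fintype.card t = n' := by
      have := Module.finrank_eq_card_basis b
      rw [Module.finrank_fin_fun] at this
      omega
    have e : Fin n' ≃ t := (Fintype.equivFinOfCardEq hcard).symm
    have hw : ∀ i : Fin n', ∃ w : List Γ,
        Matrix.vecMul α' (wordProd M' w) = (e i : Fin n' → ℝ) := fun i => hts (e i).2
    choose u hu' using hw
    refine ⟨u, ?_⟩
    have : (fun i => Matrix.vecMul α' (wordProd M' (u i))) =
        (fun x : t => (x : Fin n' → ℝ)) ∘ e := funext fun i => hu' i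
    rw [this]
    exact hli.comp e e.injective
  obtain ⟨v, hv⟩ : ∃ v : Fin n' → List Γ,
      LinearIndependent ℝ (fun j => (wordProd M' (v j)).mulVec η') := by
    obtain ⟨t, hts, hsp, hli⟩ := exists_linearIndependent ℝ
      (Set.range (fun w : List Γ => (wordProd M' w).mulVec η'))
    rw [hb] at hsp
    have b : Module.Basis t ℝ (Fin n' → ℝ) := Module.Basis.mk hli (by rw [Subtype.range_coe, hsp])
    have : Fintype t := FiniteDimensional.fintypeBasisIndex b
    have hcard : Fintype.card t = n' := by
      have := Module.finrank_eq_card_basis b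
      rw [Module.finrank_fin_fun] at this
      omega
    have e : Fin n' ≃ t := (Fintype.equivFinOfCardEq hcard).symm
    have hw : ∀ j : Fin n', ∃ w : List Γ,
        (wordProd M' w).mulVec η' = (e j : Fin n' → ℝ) := fun j => hts (e j).2
    choose v hv' using hw
    refine ⟨v, ?_⟩
    have : (fun j => (wordProd M' (v j)).mulVec η') =
        (fun x : t => (x : Fin n' → ℝ)) ∘ e := funext fun j => hv' j
    rw [this]
    exact hli.comp e e.injective
  -- P rows, Q columns
  set P : Matrix (Fin n') (Fin n') ℝ := fun i => Matrix.vecMul α' (wordProd M' (u i)) with hP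
  set Q : Matrix (Fin n') (Fin n') ℝ :=
    (fun j => (wordProd M' (v j)).mulVec η' : Fin n' → Fin n' → ℝ)ᵀ with hQ
  have hPunit : IsUnit P := Matrix.linearIndependent_rows_iff_isUnit.mp hu
  have hQunit : IsUnit Q := by
    apply Matrix.linearIndependent_cols_iff_isUnit.mp
    exact hv
  -- H = P * Q is a unit
  have hHunit : IsUnit (P * Q) := hPunit.mul hQunit
  -- Factorization through A''
  set P'' : Matrix (Fin n') (Fin n'') ℝ := fun i => Matrix.vecMul α'' (wordProd M'' (u i))
    with hP''
  set Q'' : Matrix (Fin n'') (Fin n') ℝ :=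
    (fun j => (wordProd M'' (v j)).mulVec η'' : Fin n' → Fin n'' → ℝ)ᵀ with hQ''
  have hfac : P * Q = P'' * Q'' := by
    ext i j
    have h1 : (P * Q) i j = WAlang M' α' η' (u i ++ v j) := by
      rw [WAlang, wordProd_append, ← Matrix.mulVec_mulVec, Matrix.dotProduct_mulVec]
      simp [hP, hQ, Matrix.mul_apply, dotProduct]
      rfl
    have h2 : (P'' * Q'') i j = WAlang M'' α'' η'' (u i ++ v j) := by
      rw [WAlang, wordProd_append, ← Matrix.mulVec_mulVec, Matrix.dotProduct_mulVec]
      simp [hP'', hQ'', Matrix.mul_apply, dotProduct]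
      rfl
    rw [h1, h2, heq]
  have : (P * Q).rank = n' := by
    rw [Matrix.rank_of_isUnit _ hHunit, Fintype.card_fin]
  calc n' = (P * Q).rank := this.symm
    _ = (P'' * Q'').rank := by rw [hfac]
    _ ≤ P''.rank := Matrix.rank_mul_le_left _ _
    _ ≤ n'' := Matrix.rank_le_width P''


theorem forward_backward_minimal {Γ : Type*} {n n' : ℕ}
    (M : Γ → Matrix (Fin n) (Fin n) ℝ) (α η : Fin n → ℝ)
    (M' : Γ → Matrix (Fin n') (Fin n') ℝ) (α' η' : Fin n' → ℝ)
    (h :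
      (∃ (nb : ℕ) (Mb : Γ → Matrix (Fin nb) (Fin nb) ℝ) (αb ηb : Fin nb → ℝ)
          (B : Matrix (Fin n) (Fin nb) ℝ) (F : Matrix (Fin n') (Fin nb) ℝ),
          IsBackwardWAOf M α η Mb αb ηb B ∧ IsForwardWAOf Mb αb ηb M' α' η' F) ∨
      (∃ (nf : ℕ) (Mf : Γ → Matrix (Fin nf) (Fin nf) ℝ) (αf ηf : Fin nf → ℝ)
          (F : Matrix (Fin nf) (Fin n) ℝ) (B : Matrix (Fin nf) (Fin n') ℝ),
          IsForwardWAOf M α η Mf αf ηf F ∧ IsBackwardWAOf Mf αf ηf M' α' η' B)) :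
    (∀ w : List Γ, WAlang M' α' η' w = WAlang M α η w) ∧
    (∀ (n'' : ℕ) (M'' : Γ → Matrix (Fin n'') (Fin n'') ℝ) (α'' η'' : Fin n'' → ℝ),
      (∀ w : List Γ, WAlang M'' α'' η'' w = WAlang M α η w) → n' ≤ n'') := by
  -- In both cases we establish equivalence plus full forward/backward spans of A'.
  have main : (∀ w : List Γ, WAlang M' α' η' w = WAlang M α η w) ∧
      Submodule.span ℝ
        (Set.range (fun w : List Γ => Matrix.vecMul α' (wordProd M' w))) = ⊤ ∧
      Submodule.span ℝ
        (Set.range (fun w : List Γ => (wordProd M' w).mulVec η')) = ⊤ := by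
    rcases h with ⟨nb, Mb, αb, ηb, B, F, hB, hF⟩ | ⟨nf, Mf, αf, ηf, F, B, hF, hB⟩
    · -- backward then forward
      obtain ⟨hBli, hBspan, hBc, hBα, hBη⟩ := hB
      obtain ⟨hFli, hFspan, hFc, hFα, hFη⟩ := hF
      refine ⟨fun w => (forward_lang ⟨hFli, hFspan, hFc, hFα, hFη⟩ w).trans
        (backward_lang ⟨hBli, hBspan, hBc, hBα, hBη⟩ w), ?_, ?_⟩
      · -- forward span of A' is top, via injective vecMul F
        apply span_eq_top_of_inj F.vecMulLinear
          (Matrix.vecMul_injective_iff.mpr hFli)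
          _ (fun w : List Γ => Matrix.vecMul αb (wordProd Mb w))
        · intro w
          simp only [Matrix.vecMulLinear_apply]
          rw [Matrix.vecMul_vecMul]
          rw [show wordProd M' w * F = F * wordProd Mb w from
            (intertwine Mb M' F hFc w).symm]
          rw [← Matrix.vecMul_vecMul, ← hFα]
        · rw [range_vecMulLinear, ← fwdSet_eq_range]; exact hFspan.symm
      · -- backward span of A' is top: backward span of Ab is top, pushed by surjective mulVec F
        have hAbTop : Submodule.span ℝ
            (Set.range (fun w : List Γ => (wordProd Mb w).mulVec ηb)) = ⊤ := by
          apply span_eq_top_of_inj B.mulVecLin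
            (Matrix.mulVec_injective_iff.mpr hBli)
            _ (fun w : List Γ => (wordProd M w).mulVec η)
          · intro w
            simp only [Matrix.mulVecLin_apply]
            rw [Matrix.mulVec_mulVec, show B * wordProd Mb w = wordProd M w * B from
              (intertwine Mb M B (fun a => (hBc a).symm) w), ← Matrix.mulVec_mulVec, ← hBη]
          · rw [Matrix.range_mulVecLin, ← bwdSet_eq_range]; exact hBspan.symm
        apply span_eq_top_of_surj F.mulVecLin (mulVec_surjective_of_li_rows hFli)
          (fun w : List Γ => (wordProd Mb w).mulVec ηb) _ _ hAbTop
        intro w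
        simp only [Matrix.mulVecLin_apply]
        rw [Matrix.mulVec_mulVec, intertwine Mb M' F hFc w, ← Matrix.mulVec_mulVec, ← hFη]
    · -- forward then backward
      obtain ⟨hFli, hFspan, hFc, hFα, hFη⟩ := hF
      obtain ⟨hBli, hBspan, hBc, hBα, hBη⟩ := hB
      refine ⟨fun w => (backward_lang ⟨hBli, hBspan, hBc, hBα, hBη⟩ w).trans
        (forward_lang ⟨hFli, hFspan, hFc, hFα, hFη⟩ w), ?_, ?_⟩
      · -- forward span of Af is top, pushed by surjective vecMul B
        have hAfTop : Submodule.span ℝ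
            (Set.range (fun w : List Γ => Matrix.vecMul αf (wordProd Mf w))) = ⊤ := by
          apply span_eq_top_of_inj F.vecMulLinear (Matrix.vecMul_injective_iff.mpr hFli)
            _ (fun w : List Γ => Matrix.vecMul α (wordProd M w))
          · intro w
            simp only [Matrix.vecMulLinear_apply]
            rw [Matrix.vecMul_vecMul, show wordProd Mf w * F = F * wordProd M w from
              (intertwine M Mf F hFc w).symm, ← Matrix.vecMul_vecMul, ← hFα]
          · rw [range_vecMulLinear, ← fwdSet_eq_range]; exact hFspan.symm
        apply span_eq_top_of_surj B.vecMulLinear (vecMul_surjective_of_li_cols hBli)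
          (fun w : List Γ => Matrix.vecMul αf (wordProd Mf w)) _ _ hAfTop
        intro w
        simp only [Matrix.vecMulLinear_apply]
        rw [Matrix.vecMul_vecMul, show wordProd Mf w * B = B * wordProd M' w from
          (intertwine M' Mf B (fun a => (hBc a).symm) w).symm,
          ← Matrix.vecMul_vecMul, ← hBα]
      · -- backward span of A' is top via injective mulVec B
        apply span_eq_top_of_inj B.mulVecLin (Matrix.mulVec_injective_iff.mpr hBli)
          _ (fun w : List Γ => (wordProd Mf w).mulVec ηf)
        · intro w
          simp only [Matrix.mulVecLin_apply]
          rw [Matrix.mulVec_mulVec, show B * wordProd M' w = wordProd Mf w * B from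
            intertwine M' Mf B (fun a => (hBc a).symm) w, ← Matrix.mulVec_mulVec, ← hBη]
        · rw [Matrix.range_mulVecLin, ← bwdSet_eq_range]; exact hBspan.symm
  exact ⟨main.1, fun n'' M'' α'' η'' heq =>
    key_minimal M' α' η' main.2.1 main.2.2 M'' α'' η''
      (fun w => (heq w).trans (main.1 w).symm)⟩
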